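/- Positivity of the first-order 1D well-balanced DG scheme with gravity source (Theorem 3.2): let Ū_{j−1}, Ū_j = (ρ̄_j, m̄_j, Ē_j), Ū_{j+1} ∈ G, let p̄^e_{j−1}, p̄^e_j, p̄^e_{j+1} > 0, p^{e,⋆}_{j−1/2}, p^{e,⋆}_{j+1/2} > 0, and ρ̄^e_j > 0. Define the modified HLLC fluxes F̂_{j+1/2} = F^hllc((p^{e,⋆}_{j+1/2}/p̄^e_j) Ū_j, (p^{e,⋆}_{j+1/2}/p̄^e_{j+1}) Ū_{j+1}) and F̂_{j−1/2} = F^hllc((p^{e,⋆}_{j−1/2}/p̄^e_{j−1}) Ū_{j−1}, (p^{e,⋆}_{j−1/2}/p̄^e_j) Ū_j), the discretized source S̄_j = ((p^{e,⋆}_{j+1/2} − p^{e,⋆}_{j−1/2})/(h ρ̄^e_j)) · (0, ρ̄_j, m̄_j), the specific internal energy ē_j = (Ē_j − m̄_j²/(2ρ̄_j))/ρ̄_j, and the constants α̂^F_j = 2((p^{e,⋆}_{j+1/2} + p^{e,⋆}_{j−1/2})/p̄^e_j) · max{α_max(Ū_{j−1}), α_max(Ū_j), α_max(Ū_{j+1})}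 and α̂^S_j = |p^{e,⋆}_{j+1/2} − p^{e,⋆}_{j−1/2}|/(ρ̄^e_j √(2ē_j)). If Δt > 0 and h > 0 satisfy (α̂^F_j + α̂^S_j)·Δt ≤ h, then Ū_j − (Δt/h)(F̂_{j+1/2} − F̂_{j−1/2}) + Δt·S̄_j ∈ G. -/

import Mathlib

noncomputable section

/-- A 1D state `U = (ρ, m, E)`. -/
abbrev St : Type := ℝ × ℝ × ℝ

/-- The admissible set `G = {(ρ, m, E) : ρ > 0, E − m²/(2ρ) > 0}`. -/
def admG : Set St := {U | 0 < U.1 ∧ 0 < U.2.2 - U.2.1 ^ 2 / (2 * U.1)}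

/-- The velocity `u = m/ρ`. -/
def vel (U : St) : ℝ := U.2.1 / U.1

/-- The pressure `p = (γ−1)(E − m²/(2ρ))`. -/
def press (γ : ℝ) (U : St) : ℝ := (γ - 1) * (U.2.2 - U.2.1 ^ 2 / (2 * U.1))

/-- The sound speed `√(γ p / ρ)`. -/
def sound (γ : ℝ) (U : St) : ℝ := Real.sqrt (γ * press γ U / U.1)

/-- The specific internal energy `e = (E − m²/(2ρ))/ρ`. -/
def specE (U : St) : ℝ := (U.2.2 - U.2.1 ^ 2 / (2 * U.1)) / U.1

/-- The Euler flux `F(U) = (ρu, ρu² + p, (E+p)u)`. -/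
def eulerF (γ : ℝ) (U : St) : St :=
  (U.1 * vel U, U.1 * vel U ^ 2 + press γ U, (U.2.2 + press γ U) * vel U)

/-- `α₋(U) = u − √(γp/ρ)`. -/
def alphaMinus (γ : ℝ) (U : St) : ℝ := vel U - sound γ U

/-- `α₊(U) = u + √(γp/ρ)`. -/
def alphaPlus (γ : ℝ) (U : St) : ℝ := vel U + sound γ U

/-- `α_max(U) = |u| + √(γp/ρ)`. -/
def alphaMax (γ : ℝ) (U : St) : ℝ := |vel U| + sound γ U

/-- Left wave speed `S_L = min(α₋(U_L), α₋(U_R))`. -/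
def SL (γ : ℝ) (UL UR : St) : ℝ := min (alphaMinus γ UL) (alphaMinus γ UR)

/-- Right wave speed `S_R = max(α₊(U_L), α₊(U_R))`. -/
def SR (γ : ℝ) (UL UR : St) : ℝ := max (alphaPlus γ UL) (alphaPlus γ UR)

/-- Middle wave speed `S_*`. -/
def Sstar (γ : ℝ) (UL UR : St) : ℝ :=
  (press γ UR - press γ UL + UL.1 * vel UL * (SL γ UL UR - vel UL)
      - UR.1 * vel UR * (SR γ UL UR - vel UR)) /
    (UL.1 * (SL γ UL UR - vel UL) - UR.1 * (SR γ UL UR - vel UR))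

/-- HLLC intermediate state
`U_{*i} = ρ_i (S_i − u_i)/(S_i − S_*) · (1, S_*, E_i/ρ_i + (S_* − u_i)(S_* + p_i/(ρ_i(S_i − u_i))))`. -/
def Ustar (γ : ℝ) (Si Sst : ℝ) (Ui : St) : St :=
  (Ui.1 * ((Si - vel Ui) / (Si - Sst))) •
    (((1 : ℝ), Sst,
      Ui.2.2 / Ui.1 + (Sst - vel Ui) * (Sst + press γ Ui / (Ui.1 * (Si - vel Ui)))) : St)

/-- Intermediate flux `F_{*i} = F(U_i) + S_i (U_{*i} − U_i)`. -/
def Fstar (γ : ℝ) (Si Sst : ℝ) (Ui : St) : St :=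
  eulerF γ Ui + Si • (Ustar γ Si Sst Ui - Ui)

/-- The HLLC numerical flux. -/
def Fhllc (γ : ℝ) (UL UR : St) : St :=
  if 0 ≤ SL γ UL UR then eulerF γ UL
  else if 0 ≤ Sstar γ UL UR then Fstar γ (SL γ UL UR) (Sstar γ UL UR) UL
  else if 0 ≤ SR γ UL UR then Fstar γ (SR γ UL UR) (Sstar γ UL UR) UR
  else eulerF γ UR

end

noncomputable section Aux2

lemma star_num_pos {γ ρ P S Sst u : ℝ} (hγ : 1 < γ) (hρ : 0 < ρ) (hP : 0 < P)
    (hsq : γ * (γ-1) * P ≤ ρ * (S-u)^2) :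
    0 < 2*P*(S-u)^2 + ρ*((Sst-u)*(S-u))^2 + 2*(γ-1)*P*((Sst-u)*(S-u)) := by
  have hid : ρ*(2*P*(S-u)^2 + ρ*((Sst-u)*(S-u))^2 + 2*(γ-1)*P*((Sst-u)*(S-u)))
      = (ρ*((Sst-u)*(S-u)) + (γ-1)*P)^2 + (2*P*(ρ*(S-u)^2) - (γ-1)^2*P^2) := by ring
  have hlast : 0 < 2*P*(γ*(γ-1)*P) - (γ-1)^2*P^2 := by nlinarith [mul_pos hP hP]
  have hsq2 : 2*P*(γ*(γ-1)*P) ≤ 2*P*(ρ*(S-u)^2) :=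
    mul_le_mul_of_nonneg_left hsq (by linarith)
  have h9 : 0 < ρ * (2*P*(S-u)^2 + ρ*((Sst-u)*(S-u))^2 + 2*(γ-1)*P*((Sst-u)*(S-u))) := by
    rw [hid]
    nlinarith [sq_nonneg (ρ*((Sst-u)*(S-u)) + (γ-1)*P)]
  by_contra hcon
  push_neg at hcon
  nlinarith [h9]

lemma Ustar_mem_core2 (γ ρ u P S Sst : ℝ) (hγ : 1 < γ) (hρ : 0 < ρ) (hP : 0 < P)
    (hsgn : 0 < (S - u)/(S - Sst))
    (hsq : γ * (γ-1) * P ≤ ρ * (S-u)^2) :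
    ((ρ * ((S - u)/(S - Sst))) •
      (((1:ℝ), Sst, (P/ρ + u^2/2) + (Sst - u)*(Sst + ((γ-1)*P)/(ρ*(S-u))))) : St) ∈ admG := by
  have hd : S - u ≠ 0 := by intro h; rw [h] at hsgn; simp at hsgn
  have hw : S - Sst ≠ 0 := by intro h; rw [h] at hsgn; simp at hsgn
  have hR : 0 < ρ * ((S - u)/(S - Sst)) := mul_pos hρ hsgn
  constructor
  · show 0 < ρ * ((S - u)/(S - Sst)) * 1
    simpa using hR
  · show 0 < ρ * ((S - u)/(S - Sst)) * ((P/ρ + u^2/2) + (Sst - u)*(Sst + ((γ-1)*P)/(ρ*(S-u))))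
      - (ρ * ((S - u)/(S - Sst)) * Sst)^2 / (2*(ρ * ((S - u)/(S - Sst)) * 1))
    have heq : ρ * ((S - u)/(S - Sst)) * ((P/ρ + u^2/2) + (Sst - u)*(Sst + ((γ-1)*P)/(ρ*(S-u))))
        - (ρ * ((S - u)/(S - Sst)) * Sst)^2 / (2*(ρ * ((S - u)/(S - Sst)) * 1))
        = (ρ * ((S - u)/(S - Sst))) *
          ((2*P*(S-u)^2 + ρ*((Sst-u)*(S-u))^2 + 2*(γ-1)*P*((Sst-u)*(S-u)))/(2*ρ*(S-u)^2)) := by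
      field_simp
      ring
    rw [heq]
    exact mul_pos hR (div_pos (star_num_pos hγ hρ hP hsq) (by positivity))

/-- Admissibility of the HLLC intermediate state. -/
lemma Ustar_mem {γ : ℝ} (hγ : 1 < γ) {U : St} (hU : U ∈ admG) (S Sst : ℝ)
    (hsq : γ * press γ U / U.1 ≤ (S - vel U) ^ 2)
    (hsgn : 0 < (S - vel U) / (S - Sst)) :
    Ustar γ S Sst U ∈ admG := by
  obtain ⟨hρ, hP⟩ := hU
  have hρne : U.1 ≠ 0 := hρ.ne'
  have hsq' : γ * (γ-1) * (U.2.2 - U.2.1^2/(2*U.1)) ≤ U.1 * (S - vel U)^2 := by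
    have h0 := (div_le_iff₀ hρ).mp hsq
    have : press γ U = (γ-1) * (U.2.2 - U.2.1^2/(2*U.1)) := rfl
    nlinarith [h0]
  have hE : U.2.2 / U.1 = (U.2.2 - U.2.1^2/(2*U.1))/U.1 + (vel U)^2/2 := by
    rw [vel]
    field_simp
    ring
  have hpress : press γ U = (γ-1) * (U.2.2 - U.2.1^2/(2*U.1)) := rfl
  have hrw : Ustar γ S Sst U = ((U.1 * ((S - vel U)/(S - Sst))) •
      (((1:ℝ), Sst, ((U.2.2 - U.2.1^2/(2*U.1))/U.1 + (vel U)^2/2)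
        + (Sst - vel U)*(Sst + ((γ-1)*(U.2.2 - U.2.1^2/(2*U.1)))/(U.1*(S - vel U))))) : St) := by
    unfold Ustar
    rw [← hpress, ← hE]
  rw [hrw]
  exact Ustar_mem_core2 γ U.1 (vel U) (U.2.2 - U.2.1^2/(2*U.1)) S Sst hγ hρ hP hsgn hsq'

/-- Representation of the intermediate flux. -/
lemma Fstar_rep {γ : ℝ} (S Sst : ℝ) (U : St) (hρ : U.1 ≠ 0)
    (hd : S - vel U ≠ 0) (hw : S - Sst ≠ 0) :
    Fstar γ S Sst U =
      ((Ustar γ S Sst U).1 * Sst,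
        (Ustar γ S Sst U).1 * Sst^2 + (press γ U + U.1 * (S - vel U) * (Sst - vel U)),
        ((Ustar γ S Sst U).2.2 + (press γ U + U.1 * (S - vel U) * (Sst - vel U))) * Sst) := by
  have hm : U.2.1 = U.1 * vel U := by rw [vel]; field_simp
  have e1 : (Ustar γ S Sst U).1 = U.1 * ((S - vel U) / (S - Sst)) * 1 := rfl
  have e2 : (Ustar γ S Sst U).2.1 = U.1 * ((S - vel U) / (S - Sst)) * Sst := rfl
  have e3 : (Ustar γ S Sst U).2.2 = U.1 * ((S - vel U) / (S - Sst)) *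
      (U.2.2 / U.1 + (Sst - vel U) * (Sst + press γ U / (U.1 * (S - vel U)))) := rfl
  unfold Fstar eulerF
  show (_, _, _) = (_, _, _)
  refine Prod.ext ?_ (Prod.ext ?_ ?_)
  · simp only [Prod.fst_add, Prod.snd_add, Prod.smul_fst, Prod.smul_snd, smul_eq_mul,
      Prod.fst_sub, Prod.snd_sub, e1, e2, e3]
    field_simp
    ring
  · simp only [Prod.fst_add, Prod.snd_add, Prod.smul_fst, Prod.smul_snd, smul_eq_mul,
      Prod.fst_sub, Prod.snd_sub, e1, e2, e3]
    rw [hm]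
    field_simp
    ring
  · simp only [Prod.fst_add, Prod.snd_add, Prod.smul_fst, Prod.smul_snd, smul_eq_mul,
      Prod.fst_sub, Prod.snd_sub, e1, e2, e3]
    field_simp
    ring

end Aux2

noncomputable section Aux3

lemma press_pos {γ : ℝ} (hγ : 1 < γ) {U : St} (hU : U ∈ admG) : 0 < press γ U := by
  have := hU.2
  unfold press
  nlinarith

lemma sound_pos {γ : ℝ} (hγ : 1 < γ) {U : St} (hU : U ∈ admG) : 0 < sound γ U := by
  apply Real.sqrt_pos.mpr
  have h1 := press_pos hγ hU
  have h2 := hU.1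
  positivity

lemma sound_sq {γ : ℝ} (hγ : 1 < γ) {U : St} (hU : U ∈ admG) :
    sound γ U ^ 2 = γ * press γ U / U.1 := by
  apply Real.sq_sqrt
  have h1 := press_pos hγ hU
  have h2 := hU.1
  positivity

lemma Ustar_mom (γ S Sst : ℝ) (U : St) :
    (Ustar γ S Sst U).2.1 = (Ustar γ S Sst U).1 * Sst := by
  show U.1 * ((S - vel U) / (S - Sst)) * Sst = U.1 * ((S - vel U) / (S - Sst)) * 1 * Sst
  ring


lemma sq_bound_core {a b c : ℝ} (h : c ≤ b - a) (hc : 0 < c) : c^2 ≤ (a - b)^2 := by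
  nlinarith

lemma sq_bound_core' {a b c : ℝ} (h : c ≤ a - b) (hc : 0 < c) : c^2 ≤ (a - b)^2 := by
  nlinarith

lemma hD_core {rL rR dL dR : ℝ} (hρL : 0 < rL) (hρR : 0 < rR) (hdL : dL < 0) (hdR : 0 < dR) :
    rL * dL - rR * dR < 0 := by
  nlinarith [mul_pos hρL (neg_pos.mpr hdL), mul_pos hρR hdR]

lemma hslD_core {pL pR rL rR uL uR cR sl sr γ : ℝ} (hγ : 1 < γ)
    (hpL : 0 < pL) (hpR : 0 < pR) (hρL : 0 < rL) (hρR : 0 < rR)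
    (hcR : 0 < cR) (hcR2' : rR * cR^2 = γ * pR)
    (k1 : cR ≤ sr - uR) (k2 : cR ≤ uR - sl) :
    pR - pL + rL * uL * (sl - uL) - rR * uR * (sr - uR)
      < sl * (rL * (sl - uL) - rR * (sr - uR)) := by
  have k3 : cR * cR ≤ (sr - uR) * (uR - sl) := mul_le_mul k1 k2 hcR.le (by linarith)
  have k4 : rR * (cR * cR) ≤ rR * ((sr - uR) * (uR - sl)) :=
    mul_le_mul_of_nonneg_left k3 hρR.le
  nlinarith [mul_nonneg hρL.le (sq_nonneg (sl - uL)), k4, hcR2', hpL, hpR, hγ]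

lemma hsrD_core {pL pR rL rR uL uR cL sl sr γ : ℝ} (hγ : 1 < γ)
    (hpL : 0 < pL) (hpR : 0 < pR) (hρL : 0 < rL) (hρR : 0 < rR)
    (hcL : 0 < cL) (hcL2' : rL * cL^2 = γ * pL)
    (k1 : cL ≤ uL - sl) (k2 : cL ≤ sr - uL) :
    sr * (rL * (sl - uL) - rR * (sr - uR))
      < pR - pL + rL * uL * (sl - uL) - rR * uR * (sr - uR) := by
  have k3 : cL * cL ≤ (uL - sl) * (sr - uL) := mul_le_mul k1 k2 hcL.le (by linarith)
  have k4 : rL * (cL * cL) ≤ rL * ((uL - sl) * (sr - uL)) :=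
    mul_le_mul_of_nonneg_left k3 hρL.le
  nlinarith [mul_nonneg hρR.le (sq_nonneg (sr - uR)), k4, hcL2', hpL, hpR, hγ]

/-- Core facts about the HLLC wave structure. -/
lemma hllc_core {γ : ℝ} (hγ : 1 < γ) {UL UR : St} (hL : UL ∈ admG) (hR : UR ∈ admG) :
    SL γ UL UR < Sstar γ UL UR ∧ Sstar γ UL UR < SR γ UL UR ∧
    Ustar γ (SL γ UL UR) (Sstar γ UL UR) UL ∈ admG ∧
    Ustar γ (SR γ UL UR) (Sstar γ UL UR) UR ∈ admG ∧
    Fstar γ (SR γ UL UR) (Sstar γ UL UR) UR =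
      Fstar γ (SL γ UL UR) (Sstar γ UL UR) UL +
        (Sstar γ UL UR) • (Ustar γ (SR γ UL UR) (Sstar γ UL UR) UR
          - Ustar γ (SL γ UL UR) (Sstar γ UL UR) UL) := by
  have hρL : 0 < UL.1 := hL.1
  have hρR : 0 < UR.1 := hR.1
  have hpL : 0 < press γ UL := press_pos hγ hL
  have hpR : 0 < press γ UR := press_pos hγ hR
  have hcL : 0 < sound γ UL := sound_pos hγ hL
  have hcR : 0 < sound γ UR := sound_pos hγ hR
  have hcL2 : sound γ UL ^ 2 = γ * press γ UL / UL.1 := sound_sq hγ hL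
  have hcR2 : sound γ UR ^ 2 = γ * press γ UR / UR.1 := sound_sq hγ hR
  have hcL2' : UL.1 * sound γ UL ^ 2 = γ * press γ UL := by
    rw [hcL2]; field_simp
  have hcR2' : UR.1 * sound γ UR ^ 2 = γ * press γ UR := by
    rw [hcR2]; field_simp
  have hsl1 : SL γ UL UR ≤ vel UL - sound γ UL := min_le_left _ _
  have hsl2 : SL γ UL UR ≤ vel UR - sound γ UR := min_le_right _ _
  have hsr1 : vel UL + sound γ UL ≤ SR γ UL UR := le_max_left _ _
  have hsr2 : vel UR + sound γ UR ≤ SR γ UL UR := le_max_right _ _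
  set sl := SL γ UL UR with hsl_def
  set sr := SR γ UL UR with hsr_def
  set s := Sstar γ UL UR with hs_def
  clear_value sl sr s
  have hdL : sl - vel UL < 0 := by linarith
  have hdR : 0 < sr - vel UR := by linarith
  have hD : UL.1 * (sl - vel UL) - UR.1 * (sr - vel UR) < 0 :=
    hD_core hρL hρR hdL hdR
  have hs_eq : s * (UL.1 * (sl - vel UL) - UR.1 * (sr - vel UR))
      = press γ UR - press γ UL + UL.1 * vel UL * (sl - vel UL)
        - UR.1 * vel UR * (sr - vel UR) := by
    rw [hs_def, Sstar, ← hsl_def, ← hsr_def]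
    exact div_mul_cancel₀ _ hD.ne
  -- squared-speed bounds
  have hsqL : γ * press γ UL / UL.1 ≤ (sl - vel UL)^2 := by
    rw [← hcL2]
    exact sq_bound_core (by linarith) hcL
  have hsqR : γ * press γ UR / UR.1 ≤ (sr - vel UR)^2 := by
    rw [← hcR2]
    exact sq_bound_core' (by linarith) hcR
  -- SL < Sstar
  have hslD : press γ UR - press γ UL + UL.1 * vel UL * (sl - vel UL)
      - UR.1 * vel UR * (sr - vel UR) < sl * (UL.1 * (sl - vel UL) - UR.1 * (sr - vel UR)) :=
    hslD_core hγ hpL hpR hρL hρR hcR hcR2' (by linarith) (by linarith)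
  have hsl_lt : sl < s := by
    by_contra hcon
    push_neg at hcon
    have := mul_le_mul_of_nonpos_right hcon hD.le
    linarith [hs_eq, this, hslD]
  -- Sstar < SR
  have hsrD : sr * (UL.1 * (sl - vel UL) - UR.1 * (sr - vel UR))
      < press γ UR - press γ UL + UL.1 * vel UL * (sl - vel UL)
        - UR.1 * vel UR * (sr - vel UR) :=
    hsrD_core hγ hpL hpR hρL hρR hcL hcL2' (by linarith) (by linarith)
  have hs_lt : s < sr := by
    by_contra hcon
    push_neg at hcon
    have := mul_le_mul_of_nonpos_right hcon hD.le
    linarith [hs_eq, this, hsrD]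
  -- intermediate state memberships
  have hUstL : Ustar γ sl s UL ∈ admG := by
    apply Ustar_mem hγ hL sl s hsqL
    apply div_pos_iff.mpr
    right
    exact ⟨hdL, by linarith⟩
  have hUstR : Ustar γ sr s UR ∈ admG := by
    apply Ustar_mem hγ hR sr s hsqR
    apply div_pos_iff.mpr
    left
    exact ⟨hdR, by linarith⟩
  refine ⟨hsl_lt, hs_lt, hUstL, hUstR, ?_⟩
  -- consistency identity
  have hdLne : sl - vel UL ≠ 0 := hdL.ne
  have hdRne : sr - vel UR ≠ 0 := hdR.ne'
  have hwL : sl - s ≠ 0 := by linarith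
  have hwR : sr - s ≠ 0 := by linarith
  have pstar_eq : press γ UL + UL.1 * (sl - vel UL) * (s - vel UL)
      = press γ UR + UR.1 * (sr - vel UR) * (s - vel UR) := by
    linear_combination hs_eq
  rw [Fstar_rep sl s UL hρL.ne' hdLne hwL, Fstar_rep sr s UR hρR.ne' hdRne hwR]
  refine Prod.ext ?_ (Prod.ext ?_ ?_) <;>
    simp only [Prod.fst_add, Prod.snd_add, Prod.smul_fst, Prod.smul_snd, smul_eq_mul,
      Prod.fst_sub, Prod.snd_sub, Ustar_mom]
  · ring
  · linear_combination -pstar_eq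
  · linear_combination (-s) * pstar_eq

end Aux3

noncomputable section Aux4

lemma admG_add {U V : St} (hU : U ∈ admG) (hV : V ∈ admG) : U + V ∈ admG := by
  obtain ⟨h1, h2⟩ := hU
  obtain ⟨h3, h4⟩ := hV
  refine ⟨add_pos h1 h3, ?_⟩
  have key : (U.2.2 + V.2.2) - (U.2.1 + V.2.1)^2/(2*(U.1+V.1))
      - ((U.2.2 - U.2.1^2/(2*U.1)) + (V.2.2 - V.2.1^2/(2*V.1)))
      = (U.2.1*V.1 - V.2.1*U.1)^2/(2*U.1*V.1*(U.1+V.1)) := by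
    field_simp
    ring
  have hpos : 0 ≤ (U.2.1*V.1 - V.2.1*U.1)^2/(2*U.1*V.1*(U.1+V.1)) := by positivity
  show 0 < (U + V).2.2 - (U+V).2.1^2/(2*(U+V).1)
  have e1 : (U + V).2.2 = U.2.2 + V.2.2 := rfl
  have e2 : (U+V).2.1 = U.2.1 + V.2.1 := rfl
  have e3 : (U+V).1 = U.1 + V.1 := rfl
  rw [e1, e2, e3]
  nlinarith [key, hpos]

lemma admG_smul {c : ℝ} (hc : 0 < c) {U : St} (hU : U ∈ admG) : c • U ∈ admG := by
  obtain ⟨h1, h2⟩ := hU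
  have e1 : (c • U).1 = c * U.1 := rfl
  have e2 : (c • U).2.1 = c * U.2.1 := rfl
  have e3 : (c • U).2.2 = c * U.2.2 := rfl
  refine ⟨by rw [e1]; positivity, ?_⟩
  show 0 < (c • U).2.2 - (c • U).2.1^2/(2*(c • U).1)
  rw [e2, e3, e1]
  have : c * U.2.2 - (c*U.2.1)^2/(2*(c*U.1)) = c * (U.2.2 - U.2.1^2/(2*U.1)) := by
    field_simp
  rw [this]
  positivity

lemma admG_smul_add {c : ℝ} (hc : 0 ≤ c) {U V : St} (hU : U ∈ admG) (hV : V ∈ admG) :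
    c • U + V ∈ admG := by
  rcases hc.lt_or_eq with h | h
  · exact admG_add (admG_smul h hU) hV
  · simp [← h, hV]

/-- Left-sided HLLC positivity estimate. -/
lemma hllc_left {γ : ℝ} (hγ : 1 < γ) {UL UR : St} (hL : UL ∈ admG) (hR : UR ∈ admG)
    {μ : ℝ} (hμ : 0 ≤ μ) (hSL : -1 ≤ μ * SL γ UL UR) (hSR : μ * SR γ UL UR ≤ 1) :
    UL - μ • (Fhllc γ UL UR - eulerF γ UL) ∈ admG := by
  rcases hμ.lt_or_eq with hμp | hμ0
  swap
  · rw [← hμ0]; simpa using hL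
  obtain ⟨hsl_lt, hs_lt, hUstL, hUstR, hcons⟩ := hllc_core hγ hL hR
  set sl := SL γ UL UR with hsl_def
  set sr := SR γ UL UR with hsr_def
  set s := Sstar γ UL UR with hs_def
  rw [Fhllc, ← hsl_def, ← hsr_def, ← hs_def]
  split_ifs with h1 h2 h3
  · simpa using hL
  · -- SL < 0 ≤ Sstar
    push_neg at h1
    have key : UL - μ • (Fstar γ sl s UL - eulerF γ UL)
        = (1 + μ*sl) • UL + (-(μ*sl)) • Ustar γ sl s UL := by
      rw [show Fstar γ sl s UL = eulerF γ UL + sl • (Ustar γ sl s UL - UL) from rfl]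
      module
    rw [key]
    exact admG_smul_add (by linarith) hL (admG_smul (by nlinarith) hUstL)
  · -- Sstar < 0 ≤ SR
    push_neg at h1 h2
    have key : UL - μ • (Fstar γ sr s UR - eulerF γ UL)
        = (1 + μ*sl) • UL + ((μ*(s - sl)) • Ustar γ sl s UL
          + (-(μ*s)) • Ustar γ sr s UR) := by
      rw [hcons, show Fstar γ sl s UL = eulerF γ UL + sl • (Ustar γ sl s UL - UL) from rfl]
      module
    rw [key]
    refine admG_smul_add (by linarith) hL
      (admG_smul_add (by nlinarith) hUstL (admG_smul (by nlinarith) hUstR))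
  · -- SR < 0
    push_neg at h1 h2 h3
    have hFR : eulerF γ UR = (eulerF γ UL + sl • (Ustar γ sl s UL - UL)
        + s • (Ustar γ sr s UR - Ustar γ sl s UL)) - sr • (Ustar γ sr s UR - UR) := by
      apply eq_sub_of_add_eq
      rw [show eulerF γ UR + sr • (Ustar γ sr s UR - UR) = Fstar γ sr s UR from rfl, hcons]
      rw [show Fstar γ sl s UL = eulerF γ UL + sl • (Ustar γ sl s UL - UL) from rfl]
    have key : UL - μ • (eulerF γ UR - eulerF γ UL)
        = (1 + μ*sl) • UL + ((μ*(s - sl)) • Ustar γ sl s UL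
          + ((μ*(sr - s)) • Ustar γ sr s UR + (-(μ*sr)) • UR)) := by
      rw [hFR]
      module
    rw [key]
    refine admG_smul_add (by linarith) hL
      (admG_smul_add (by nlinarith) hUstL
        (admG_smul_add (by nlinarith) hUstR (admG_smul (by nlinarith) hR)))

/-- Right-sided HLLC positivity estimate. -/
lemma hllc_right {γ : ℝ} (hγ : 1 < γ) {UL UR : St} (hL : UL ∈ admG) (hR : UR ∈ admG)
    {μ : ℝ} (hμ : 0 ≤ μ) (hSL : -1 ≤ μ * SL γ UL UR) (hSR : μ * SR γ UL UR ≤ 1) :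
    UR - μ • (eulerF γ UR - Fhllc γ UL UR) ∈ admG := by
  rcases hμ.lt_or_eq with hμp | hμ0
  swap
  · rw [← hμ0]; simpa using hR
  obtain ⟨hsl_lt, hs_lt, hUstL, hUstR, hcons⟩ := hllc_core hγ hL hR
  set sl := SL γ UL UR with hsl_def
  set sr := SR γ UL UR with hsr_def
  set s := Sstar γ UL UR with hs_def
  have hFR : eulerF γ UR = (eulerF γ UL + sl • (Ustar γ sl s UL - UL)
      + s • (Ustar γ sr s UR - Ustar γ sl s UL)) - sr • (Ustar γ sr s UR - UR) := by
    apply eq_sub_of_add_eq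
    rw [show eulerF γ UR + sr • (Ustar γ sr s UR - UR) = Fstar γ sr s UR from rfl, hcons]
    rw [show Fstar γ sl s UL = eulerF γ UL + sl • (Ustar γ sl s UL - UL) from rfl]
  rw [Fhllc, ← hsl_def, ← hsr_def, ← hs_def]
  split_ifs with h1 h2 h3
  · -- 0 ≤ SL
    have key : UR - μ • (eulerF γ UR - eulerF γ UL)
        = (1 - μ*sr) • UR + ((μ*sl) • UL + ((μ*(s - sl)) • Ustar γ sl s UL
          + (μ*(sr - s)) • Ustar γ sr s UR)) := by
      rw [hFR]
      module
    rw [key]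
    refine admG_smul_add (by linarith) hR
      (admG_smul_add (by nlinarith) hL
        (admG_smul_add (by nlinarith) hUstL (admG_smul (by nlinarith) hUstR)))
  · -- SL < 0 ≤ Sstar
    push_neg at h1
    have key : UR - μ • (eulerF γ UR - Fstar γ sl s UL)
        = (1 - μ*sr) • UR + ((μ*s) • Ustar γ sl s UL
          + (μ*(sr - s)) • Ustar γ sr s UR) := by
      rw [hFR, show Fstar γ sl s UL = eulerF γ UL + sl • (Ustar γ sl s UL - UL) from rfl]
      module
    rw [key]
    refine admG_smul_add (by linarith) hR
      (admG_smul_add (by nlinarith) hUstL (admG_smul (by nlinarith) hUstR))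
  · -- Sstar < 0 ≤ SR
    push_neg at h1 h2
    have key : UR - μ • (eulerF γ UR - Fstar γ sr s UR)
        = UR + (μ*sr) • (Ustar γ sr s UR - UR) := by
      rw [show Fstar γ sr s UR = eulerF γ UR + sr • (Ustar γ sr s UR - UR) from rfl]
      module
    rw [key]
    have hnn : 0 ≤ μ * sr := mul_nonneg hμ h3
    rcases hnn.lt_or_eq with hp | hz
    · have key2 : UR + (μ*sr) • (Ustar γ sr s UR - UR)
          = (1 - μ*sr) • UR + (μ*sr) • Ustar γ sr s UR := by module
      rw [key2]
      exact admG_smul_add (by linarith) hR (admG_smul hp hUstR)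
    · rw [← hz, zero_smul, add_zero]
      exact hR
  · -- SR < 0
    simpa using hR

end Aux4

noncomputable section Aux5

lemma vel_smul {c : ℝ} (hc : c ≠ 0) (U : St) : vel (c • U) = vel U := by
  unfold vel
  have e2 : (c • U).2.1 = c * U.2.1 := rfl
  have e1 : (c • U).1 = c * U.1 := rfl
  rw [e1, e2, mul_div_mul_left _ _ hc]

lemma press_smul {γ c : ℝ} (hc : c ≠ 0) (U : St) : press γ (c • U) = c * press γ U := by
  unfold press
  have e2 : (c • U).2.1 = c * U.2.1 := rfl
  have e1 : (c • U).1 = c * U.1 := rfl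
  have e3 : (c • U).2.2 = c * U.2.2 := rfl
  rw [e1, e2, e3]
  rcases eq_or_ne U.1 0 with h | h
  · simp [h]
    ring
  · field_simp

lemma sound_smul {γ c : ℝ} (hc : c ≠ 0) (U : St) : sound γ (c • U) = sound γ U := by
  unfold sound
  rw [press_smul hc]
  congr 1
  have e1 : (c • U).1 = c * U.1 := rfl
  rw [e1]
  rcases eq_or_ne U.1 0 with h | h
  · simp [h]
  · field_simp

lemma alphaMinus_smul {γ c : ℝ} (hc : c ≠ 0) (U : St) :
    alphaMinus γ (c • U) = alphaMinus γ U := by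
  unfold alphaMinus; rw [vel_smul hc, sound_smul hc]

lemma alphaPlus_smul {γ c : ℝ} (hc : c ≠ 0) (U : St) :
    alphaPlus γ (c • U) = alphaPlus γ U := by
  unfold alphaPlus; rw [vel_smul hc, sound_smul hc]

lemma eulerF_smul {γ c : ℝ} (hc : c ≠ 0) (U : St) : eulerF γ (c • U) = c • eulerF γ U := by
  unfold eulerF
  rw [vel_smul hc, press_smul hc]
  have e1 : (c • U).1 = c * U.1 := rfl
  have e3 : (c • U).2.2 = c * U.2.2 := rfl
  rw [e1, e3]
  show (_, _, _) = (_, _, _)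
  refine Prod.ext ?_ (Prod.ext ?_ ?_) <;> simp [smul_eq_mul] <;> ring

lemma alphaMinus_ge (γ : ℝ) (U : St) : -alphaMax γ U ≤ alphaMinus γ U := by
  unfold alphaMax alphaMinus
  have := neg_abs_le (vel U)
  linarith

lemma alphaPlus_le (γ : ℝ) (U : St) : alphaPlus γ U ≤ alphaMax γ U := by
  unfold alphaMax alphaPlus
  have := le_abs_self (vel U)
  linarith

lemma alphaMax_pos {γ : ℝ} (hγ : 1 < γ) {U : St} (hU : U ∈ admG) : 0 < alphaMax γ U :=
  add_pos_of_nonneg_of_pos (abs_nonneg _) (sound_pos hγ hU)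

/-- Core inequality for the source term state. -/
lemma src_core (ρ m E p k ν : ℝ) (hρ : 0 < ρ) (hP : 0 < E - m^2/(2*ρ))
    (ha : 0 < 1 - ν*(m/ρ))
    (hbound : ν^2 * (p - k*ρ)^2 < (1 - ν*(m/ρ))^2 * (2*ρ*(E - m^2/(2*ρ)))) :
    0 < (E - ν*((E + p)*(m/ρ) - k*m))
      - (m - ν*(ρ*(m/ρ)^2 + p - k*ρ))^2 / (2*(ρ - ν*(ρ*(m/ρ) - k*0))) := by
  have hρne : ρ ≠ 0 := hρ.ne'
  have hane : 1 - ν*(m/ρ) ≠ 0 := ha.ne'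
  have hden : ρ - ν*(ρ*(m/ρ) - k*0) = ρ*(1 - ν*(m/ρ)) := by
    field_simp
    ring
  have hrm : ρ - ν*m ≠ 0 := by
    have e : ρ - ν*m = ρ*(1 - ν*(m/ρ)) := by field_simp
    rw [e]
    exact (mul_pos hρ ha).ne'
  have key : (E - ν*((E + p)*(m/ρ) - k*m))
      - (m - ν*(ρ*(m/ρ)^2 + p - k*ρ))^2 / (2*(ρ - ν*(ρ*(m/ρ) - k*0)))
      = ((1 - ν*(m/ρ))^2*(2*ρ*(E - m^2/(2*ρ))) - ν^2*(p - k*ρ)^2)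
        / (2*ρ*(1 - ν*(m/ρ))) := by
    rw [hden]
    field_simp [hrm]
    ring
  rw [key]
  apply div_pos (by linarith) (by positivity)

/-- The source-term modified state is admissible. -/
lemma src_mem {γ : ℝ} {U : St} (hU : U ∈ admG) (k ν : ℝ)
    (hν : |ν| * |vel U| + |ν| * |press γ U - k * U.1| / (U.1 * Real.sqrt (2 * specE U)) < 1) :
    U - ν • (eulerF γ U - k • (((0:ℝ), U.1, U.2.1) : St)) ∈ admG := by
  obtain ⟨hρ, hP⟩ := hU
  have hspec : 0 < specE U := div_pos hP hρ
  have hsq : 0 < Real.sqrt (2 * specE U) := Real.sqrt_pos.mpr (by linarith)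
  have hρsq : 0 < U.1 * Real.sqrt (2 * specE U) := mul_pos hρ hsq
  have h2nn : 0 ≤ |ν| * |press γ U - k * U.1| / (U.1 * Real.sqrt (2 * specE U)) := by
    positivity
  have h1 : |ν| * |vel U| < 1 := by linarith
  have ha : 0 < 1 - ν * vel U := by
    have h2 : ν * vel U ≤ |ν * vel U| := le_abs_self _
    rw [abs_mul] at h2
    linarith
  have hBlt : |ν| * |press γ U - k * U.1|
      < (1 - ν * vel U) * (U.1 * Real.sqrt (2 * specE U)) := by
    have hstep : |ν| * |press γ U - k * U.1| / (U.1 * Real.sqrt (2 * specE U))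
        < 1 - ν * vel U := by
      have h2 : ν * vel U ≤ |ν| * |vel U| := by
        rw [← abs_mul]; exact le_abs_self _
      linarith
    calc |ν| * |press γ U - k * U.1|
        = (|ν| * |press γ U - k * U.1| / (U.1 * Real.sqrt (2 * specE U)))
          * (U.1 * Real.sqrt (2 * specE U)) := by field_simp
      _ < (1 - ν * vel U) * (U.1 * Real.sqrt (2 * specE U)) :=
          mul_lt_mul_of_pos_right hstep hρsq
  have hsq2 : (U.1 * Real.sqrt (2 * specE U))^2 = 2 * U.1 * (U.2.2 - U.2.1^2/(2*U.1)) := by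
    rw [mul_pow, Real.sq_sqrt (by linarith : (0:ℝ) ≤ 2 * specE U)]
    show U.1^2 * (2 * ((U.2.2 - U.2.1 ^ 2 / (2 * U.1)) / U.1)) = _
    field_simp
  have hsqd := mul_self_lt_mul_self (by positivity) hBlt
  rw [← abs_mul, abs_mul_abs_self] at hsqd
  have e3 : (1 - ν * vel U) * (U.1 * Real.sqrt (2 * specE U))
      * ((1 - ν * vel U) * (U.1 * Real.sqrt (2 * specE U)))
      = (1 - ν * vel U)^2 * (U.1 * Real.sqrt (2 * specE U))^2 := by ring
  rw [e3, hsq2] at hsqd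
  have hbound : ν^2 * (press γ U - k*U.1)^2
      < (1 - ν * vel U)^2 * (2*U.1*(U.2.2 - U.2.1^2/(2*U.1))) := by
    calc ν^2 * (press γ U - k*U.1)^2
        = ν * (press γ U - k * U.1) * (ν * (press γ U - k * U.1)) := by ring
      _ < _ := hsqd
  constructor
  · show 0 < U.1 - ν * (U.1 * vel U - k * 0)
    rw [show U.1 - ν * (U.1 * vel U - k * 0) = U.1 * (1 - ν * vel U) from by ring]
    exact mul_pos hρ ha
  · exact src_core U.1 U.2.1 U.2.2 (press γ U) k ν hρ hP ha hbound

end Aux5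


set_option maxHeartbeats 2000000

/-- Theorem 3.2: positivity of the first-order 1D well-balanced
DG scheme with gravity source term. -/
theorem first_order_WB_positivity (γ : ℝ) (hγ : 1 < γ)
    (Ujm Uj Ujp : St) (hUjm : Ujm ∈ admG) (hUj : Uj ∈ admG) (hUjp : Ujp ∈ admG)
    (pejm pej pejp : ℝ) (hpejm : 0 < pejm) (hpej : 0 < pej) (hpejp : 0 < pejp)
    (pstl pstr : ℝ) (hpstl : 0 < pstl) (hpstr : 0 < pstr)
    (ρej : ℝ) (hρej : 0 < ρej)
    (Δt h : ℝ) (hΔt : 0 < Δt) (hh : 0 < h)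
    (hcfl :
      (2 * ((pstr + pstl) / pej) *
          max (alphaMax γ Ujm) (max (alphaMax γ Uj) (alphaMax γ Ujp))
        + |pstr - pstl| / (ρej * Real.sqrt (2 * specE Uj))) * Δt ≤ h) :
    Uj - (Δt / h) •
        (Fhllc γ ((pstr / pej) • Uj) ((pstr / pejp) • Ujp)
          - Fhllc γ ((pstl / pejm) • Ujm) ((pstl / pej) • Uj))
      + Δt • (((pstr - pstl) / (h * ρej)) • (((0 : ℝ), Uj.1, Uj.2.1) : St)) ∈ admG := by
  have hρ : 0 < Uj.1 := hUj.1
  have hP : 0 < Uj.2.2 - Uj.2.1^2/(2*Uj.1) := hUj.2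
  have hθr : (0:ℝ) < pstr/pej := div_pos hpstr hpej
  have hθl : (0:ℝ) < pstl/pej := div_pos hpstl hpej
  have hθrp : (0:ℝ) < pstr/pejp := div_pos hpstr hpejp
  have hθlm : (0:ℝ) < pstl/pejm := div_pos hpstl hpejm
  set α := max (alphaMax γ Ujm) (max (alphaMax γ Uj) (alphaMax γ Ujp)) with hα_def
  have hαUj : alphaMax γ Uj ≤ α := le_trans (le_max_left _ _) (le_max_right _ _)
  have hαUjm : alphaMax γ Ujm ≤ α := le_max_left _ _
  have hαUjp : alphaMax γ Ujp ≤ α := le_trans (le_max_right _ _) (le_max_right _ _)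
  have hα : 0 < α := lt_of_lt_of_le (alphaMax_pos hγ hUj) hαUj
  clear_value α
  have hμ : (0:ℝ) ≤ α⁻¹ := inv_nonneg.mpr hα.le
  have hinvα : α⁻¹ * -α = -1 := by field_simp
  have hinvα' : α⁻¹ * α = 1 := by field_simp
  have hlam : 0 < Δt/h := div_pos hΔt hh
  -- right interface estimate
  have hA1 : (pstr/pej) • Uj - α⁻¹ • (Fhllc γ ((pstr/pej) • Uj) ((pstr/pejp) • Ujp)
      - (pstr/pej) • eulerF γ Uj) ∈ admG := by
    have hSLeq : SL γ ((pstr/pej) • Uj) ((pstr/pejp) • Ujp)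
        = min (alphaMinus γ Uj) (alphaMinus γ Ujp) := by
      rw [SL, alphaMinus_smul hθr.ne', alphaMinus_smul hθrp.ne']
    have hSReq : SR γ ((pstr/pej) • Uj) ((pstr/pejp) • Ujp)
        = max (alphaPlus γ Uj) (alphaPlus γ Ujp) := by
      rw [SR, alphaPlus_smul hθr.ne', alphaPlus_smul hθrp.ne']
    have hge : -α ≤ SL γ ((pstr/pej) • Uj) ((pstr/pejp) • Ujp) := by
      rw [hSLeq]
      exact le_min (by linarith [alphaMinus_ge γ Uj]) (by linarith [alphaMinus_ge γ Ujp])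
    have hle : SR γ ((pstr/pej) • Uj) ((pstr/pejp) • Ujp) ≤ α := by
      rw [hSReq]
      exact max_le (by linarith [alphaPlus_le γ Uj]) (by linarith [alphaPlus_le γ Ujp])
    have hb1 : -1 ≤ α⁻¹ * SL γ ((pstr/pej) • Uj) ((pstr/pejp) • Ujp) := by
      have := mul_le_mul_of_nonneg_left hge hμ
      rwa [hinvα] at this
    have hb2 : α⁻¹ * SR γ ((pstr/pej) • Uj) ((pstr/pejp) • Ujp) ≤ 1 := by
      have := mul_le_mul_of_nonneg_left hle hμ
      rwa [hinvα'] at this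
    have := hllc_left hγ (admG_smul hθr hUj) (admG_smul hθrp hUjp) hμ hb1 hb2
    rwa [eulerF_smul hθr.ne'] at this
  -- left interface estimate
  have hA2 : (pstl/pej) • Uj - α⁻¹ • ((pstl/pej) • eulerF γ Uj
      - Fhllc γ ((pstl/pejm) • Ujm) ((pstl/pej) • Uj)) ∈ admG := by
    have hSLeq : SL γ ((pstl/pejm) • Ujm) ((pstl/pej) • Uj)
        = min (alphaMinus γ Ujm) (alphaMinus γ Uj) := by
      rw [SL, alphaMinus_smul hθlm.ne', alphaMinus_smul hθl.ne']
    have hSReq : SR γ ((pstl/pejm) • Ujm) ((pstl/pej) • Uj)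
        = max (alphaPlus γ Ujm) (alphaPlus γ Uj) := by
      rw [SR, alphaPlus_smul hθlm.ne', alphaPlus_smul hθl.ne']
    have hge : -α ≤ SL γ ((pstl/pejm) • Ujm) ((pstl/pej) • Uj) := by
      rw [hSLeq]
      exact le_min (by linarith [alphaMinus_ge γ Ujm]) (by linarith [alphaMinus_ge γ Uj])
    have hle : SR γ ((pstl/pejm) • Ujm) ((pstl/pej) • Uj) ≤ α := by
      rw [hSReq]
      exact max_le (by linarith [alphaPlus_le γ Ujm]) (by linarith [alphaPlus_le γ Uj])
    have hb1 : -1 ≤ α⁻¹ * SL γ ((pstl/pejm) • Ujm) ((pstl/pej) • Uj) := by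
      have := mul_le_mul_of_nonneg_left hge hμ
      rwa [hinvα] at this
    have hb2 : α⁻¹ * SR γ ((pstl/pejm) • Ujm) ((pstl/pej) • Uj) ≤ 1 := by
      have := mul_le_mul_of_nonneg_left hle hμ
      rwa [hinvα'] at this
    have := hllc_right hγ (admG_smul hθlm hUjm) (admG_smul hθl hUj) hμ hb1 hb2
    rwa [eulerF_smul hθl.ne'] at this
  -- source piece
  set sq := Real.sqrt (2 * specE Uj) with hsq_def
  clear_value sq
  have hspec : 0 < specE Uj := div_pos hP hρ
  have hsqpos : 0 < sq := by rw [hsq_def]; exact Real.sqrt_pos.mpr (by linarith)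
  have h0 := (div_le_one hh).mpr hcfl
  have hcfl1 : (Δt/h) * (2*((pstr+pstl)/pej)*α) + (Δt/h)*(|pstr-pstl|/(ρej*sq)) ≤ 1 := by
    have e : (Δt/h) * (2*((pstr+pstl)/pej)*α) + (Δt/h)*(|pstr-pstl|/(ρej*sq))
        = (2*((pstr+pstl)/pej)*α + |pstr-pstl|/(ρej*sq)) * Δt / h := by ring
    linarith [h0, e.le, e.ge]
  set cc := 1 - Δt/h*α*(pstr/pej + pstl/pej) with hcc_def
  clear_value cc
  have hccb : Δt/h*α*(pstr/pej + pstl/pej) + (Δt/h)*(|pstr-pstl|/(ρej*sq)) ≤ cc := by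
    rw [hcc_def]
    have e2 : (Δt/h)*(2*((pstr+pstl)/pej)*α) = 2*(Δt/h*α*(pstr/pej + pstl/pej)) := by
      field_simp
    linarith [hcfl1]
  have hccpos : 0 < cc := by
    have hp := mul_pos (mul_pos hlam hα) (add_pos hθr hθl)
    have hnn : 0 ≤ (Δt/h)*(|pstr-pstl|/(ρej*sq)) :=
      mul_nonneg hlam.le (div_nonneg (abs_nonneg _) (mul_nonneg hρej.le hsqpos.le))
    linarith [hccb]
  set ν := Δt/h*(pstr - pstl)/(cc*pej) with hν_def
  clear_value ν
  have hsound := sound_pos hγ hUj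
  have hpress := press_pos hγ hUj
  -- pressure/sound key inequality
  have hkey_p : press γ Uj/(Uj.1*sq) < sound γ Uj := by
    have harg : γ * press γ Uj / Uj.1 = γ*(γ-1)*specE Uj := by
      rw [press, specE]
      ring
    have hLHS : press γ Uj/(Uj.1*sq) = (γ-1)*specE Uj/sq := by
      rw [press, specE]
      ring
    rw [hLHS, show sound γ Uj = Real.sqrt (γ*(γ-1)*specE Uj) from by rw [sound, harg]]
    rw [Real.lt_sqrt (div_nonneg (mul_nonneg (by linarith) hspec.le) hsqpos.le)]
    rw [div_pow, hsq_def, Real.sq_sqrt (by positivity : (0:ℝ) ≤ 2*specE Uj)]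
    rw [div_lt_iff₀ (by linarith)]
    nlinarith [mul_pos hspec hspec]
  -- hypothesis for src_mem
  have hk : 0 < pej/ρej := div_pos hpej hρej
  have hsrc : |ν| * |vel Uj| + |ν| * |press γ Uj - (pej/ρej) * Uj.1| / (Uj.1 * sq) < 1 := by
    have habs : |ν| = Δt/h*|pstr-pstl|/(cc*pej) := by
      rw [hν_def, abs_div, abs_mul, abs_of_pos hlam, abs_of_pos (mul_pos hccpos hpej)]
    rw [habs]
    have hBb : |press γ Uj - (pej/ρej)*Uj.1| ≤ press γ Uj + (pej/ρej)*Uj.1 := by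
      have hkρ : 0 < (pej/ρej)*Uj.1 := mul_pos hk hρ
      exact abs_le.mpr ⟨by linarith, by linarith⟩
    have hmain : Δt/h*|pstr-pstl|/(cc*pej) * |vel Uj|
        + Δt/h*|pstr-pstl|/(cc*pej) * |press γ Uj - (pej/ρej)*Uj.1| / (Uj.1*sq)
        = (Δt/h*(|pstr-pstl|/pej) * |vel Uj|
          + Δt/h*(|pstr-pstl|/pej) * (|press γ Uj - (pej/ρej)*Uj.1| / (Uj.1*sq)))/cc := by
      field_simp
    rw [hmain, div_lt_one hccpos]
    have ha0 : 0 ≤ Δt/h*(|pstr-pstl|/pej) :=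
      mul_nonneg hlam.le (div_nonneg (abs_nonneg _) hpej.le)
    -- split the |p - kρ| bound
    have hsplit : (press γ Uj + (pej/ρej)*Uj.1)/(Uj.1*sq)
        = press γ Uj/(Uj.1*sq) + (pej/ρej)/sq := by
      field_simp
    have hS2 : Δt/h*(|pstr-pstl|/pej) * (|press γ Uj - (pej/ρej)*Uj.1| / (Uj.1*sq))
        ≤ Δt/h*(|pstr-pstl|/pej) * (press γ Uj/(Uj.1*sq) + (pej/ρej)/sq) := by
      rw [← hsplit]
      refine mul_le_mul_of_nonneg_left ?_ ha0
      exact (div_le_div_iff_of_pos_right (mul_pos hρ hsqpos)).mpr hBb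
    have hT3 : Δt/h*(|pstr-pstl|/pej)*((pej/ρej)/sq) = Δt/h*(|pstr-pstl|/(ρej*sq)) := by
      field_simp
    have hδpej : |pstr-pstl|/pej ≤ pstr/pej + pstl/pej := by
      have habs2 : |pstr - pstl| ≤ pstr + pstl := abs_le.mpr ⟨by linarith, by linarith⟩
      have h2 := mul_le_mul_of_nonneg_right habs2 (inv_nonneg.mpr hpej.le)
      calc |pstr-pstl|/pej = |pstr-pstl| * pej⁻¹ := div_eq_mul_inv _ _
        _ ≤ (pstr+pstl) * pej⁻¹ := h2
        _ = pstr/pej + pstl/pej := by rw [← div_eq_mul_inv, add_div]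
    have hfrac : |vel Uj| + press γ Uj/(Uj.1*sq) < α := by
      have e : alphaMax γ Uj = |vel Uj| + sound γ Uj := rfl
      have := hαUj
      rw [e] at this
      linarith [hkey_p]
    have hT12 : Δt/h*(|pstr-pstl|/pej) * (|vel Uj| + press γ Uj/(Uj.1*sq))
        ≤ Δt/h*(pstr/pej + pstl/pej) * (|vel Uj| + press γ Uj/(Uj.1*sq)) := by
      refine mul_le_mul_of_nonneg_right ?_ (by positivity)
      exact mul_le_mul_of_nonneg_left hδpej hlam.le
    have hT12' : Δt/h*(pstr/pej + pstl/pej) * (|vel Uj| + press γ Uj/(Uj.1*sq))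
        < Δt/h*(pstr/pej + pstl/pej) * α :=
      mul_lt_mul_of_pos_left hfrac (mul_pos hlam (add_pos hθr hθl))
    have hdistr : Δt/h*(|pstr-pstl|/pej) * (press γ Uj/(Uj.1*sq) + (pej/ρej)/sq)
        = Δt/h*(|pstr-pstl|/pej) * (press γ Uj/(Uj.1*sq))
          + Δt/h*(|pstr-pstl|/pej)*((pej/ρej)/sq) := by ring
    have hdistr2 : Δt/h*(|pstr-pstl|/pej) * (|vel Uj| + press γ Uj/(Uj.1*sq))
        = Δt/h*(|pstr-pstl|/pej)*|vel Uj|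
          + Δt/h*(|pstr-pstl|/pej) * (press γ Uj/(Uj.1*sq)) := by ring
    have hdistr3 : Δt/h*(pstr/pej + pstl/pej) * α = Δt/h*α*(pstr/pej + pstl/pej) := by ring
    linarith [hS2, hT3, hT12, hT12', hdistr, hdistr2, hdistr3, hccb]
  have hA3 : Uj - ν • (eulerF γ Uj - (pej/ρej) • (((0:ℝ), Uj.1, Uj.2.1) : St)) ∈ admG := by
    rw [hsq_def] at hsrc
    exact src_mem hUj (pej/ρej) ν hsrc
  have hcc_ne : (1 : ℝ) - Δt/h*α*(pstr/pej + pstl/pej) ≠ 0 := by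
    rw [← hcc_def]; exact hccpos.ne'
  have key : Uj - (Δt / h) • (Fhllc γ ((pstr/pej) • Uj) ((pstr/pejp) • Ujp)
        - Fhllc γ ((pstl/pejm) • Ujm) ((pstl/pej) • Uj))
      + Δt • (((pstr - pstl) / (h * ρej)) • (((0 : ℝ), Uj.1, Uj.2.1) : St))
      = (Δt/h*α) • ((pstr/pej) • Uj - α⁻¹ • (Fhllc γ ((pstr/pej) • Uj) ((pstr/pejp) • Ujp)
          - (pstr/pej) • eulerF γ Uj))
        + ((Δt/h*α) • ((pstl/pej) • Uj - α⁻¹ • ((pstl/pej) • eulerF γ Uj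
            - Fhllc γ ((pstl/pejm) • Ujm) ((pstl/pej) • Uj)))
          + cc • (Uj - ν • (eulerF γ Uj - (pej/ρej) • (((0:ℝ), Uj.1, Uj.2.1) : St)))) := by
    match_scalars
    · linear_combination -hcc_def
    · linear_combination (Δt/h) * hinvα'
    · linear_combination (-(Δt/h)) * hinvα'
    · rw [hν_def]
      field_simp [hccpos.ne']
    · rw [hν_def]
      field_simp [hccpos.ne', hα.ne']
      ring
  rw [key]
  exact admG_smul_add (mul_pos hlam hα).le hA1
    (admG_smul_add (mul_pos hlam hα).le hA2 (admG_smul hccpos hA3))
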